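/- arXiv:1505.05763 — 4 statements merged into one kernel-verified Lean document; each statement's English description precedes it below -/
import Mathlib

section
/- Let q > 1 and let h : Ω → ℝ be measurable. If h belongs to 𝕃_0^{q,∞}, i.e. t^q μ{|h| > t} → 0 as t → +∞, then the maximal function M*(h) := sup_{N ≥ 1} |S_N(h)|/N also belongs to 𝕃_0^{q,∞}, i.e. t^q μ{M*(h) > t} → 0 as t → +∞. -/
open MeasureTheory Filter Topology Set
open scoped ENNReal NNReal

noncomputable section

/-- Birkhoff sums `S_N(h) = ∑_{j=0}^{N-1} h ∘ T^j`. -/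
def partialSumT {Ω : Type*} (T : Ω → Ω) (h : Ω → ℝ) (n : ℕ) (ω : Ω) : ℝ :=
  ∑ j ∈ Finset.range n, h (T^[j] ω)

/-- The maximal function `M*(h) = sup_{N ≥ 1} |S_N(h)|/N` (with values in `ℝ≥0∞`). -/
def maxFn {Ω : Type*} (T : Ω → Ω) (h : Ω → ℝ) (ω : Ω) : ℝ≥0∞ :=
  ⨆ N : ℕ, (‖partialSumT T h (N + 1) ω‖₊ : ℝ≥0∞) / (N + 1)

/-- Running maxima of Birkhoff sums, `mxT T f n = max (0, S_1, …, S_n)`. -/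
def mxT {Ω : Type*} (T : Ω → Ω) (f : Ω → ℝ) : ℕ → Ω → ℝ
  | 0 => fun _ => 0
  | n+1 => fun ω => max (mxT T f n ω) (partialSumT T f (n+1) ω)

section Aux

variable {Ω : Type*} [MeasurableSpace Ω] {μ : Measure Ω} [IsProbabilityMeasure μ]
  (T : Ω ≃ᵐ Ω)

lemma ps_zero (f : Ω → ℝ) (ω : Ω) : partialSumT (⇑T) f 0 ω = 0 := by
  simp [partialSumT]

lemma ps_succ (f : Ω → ℝ) (n : ℕ) (ω : Ω) :
    partialSumT (⇑T) f (n+1) ω = f ω + partialSumT (⇑T) f n (T ω) := by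
  simp only [partialSumT]
  rw [Finset.sum_range_succ']
  simp only [Function.iterate_succ_apply, Function.iterate_zero_apply]
  exact add_comm _ _

lemma ps_meas {f : Ω → ℝ} (hf : Measurable f) (n : ℕ) :
    Measurable (partialSumT (⇑T) f n) := by
  apply Finset.measurable_sum
  intro j _
  exact hf.comp (T.measurable.iterate j)

lemma ps_int (hT : MeasurePreserving (⇑T) μ μ) {f : Ω → ℝ} (hfi : Integrable f μ) (n : ℕ) :
    Integrable (partialSumT (⇑T) f n) μ := by
  have key : ∀ j : ℕ, Integrable (fun ω => f (T^[j] ω)) μ := by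
    intro j
    induction j with
    | zero => simpa using hfi
    | succ j ih =>
      have h2 := (hT.integrable_comp_emb T.measurableEmbedding
        (g := fun ω => f (T^[j] ω))).mpr ih
      simpa [Function.comp_def, Function.iterate_succ_apply] using h2
  exact integrable_finset_sum _ (fun j _ => key j)

lemma mx_nonneg (f : Ω → ℝ) (n : ℕ) (ω : Ω) : 0 ≤ mxT (⇑T) f n ω := by
  induction n with
  | zero => simp [mxT]
  | succ n ih => exact ih.trans (le_max_left _ _)

lemma mx_mono (f : Ω → ℝ) (n : ℕ) (ω : Ω) : mxT (⇑T) f n ω ≤ mxT (⇑T) f (n+1) ω :=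
  le_max_left _ _

lemma ps_le_mx (f : Ω → ℝ) (n : ℕ) (ω : Ω) : partialSumT (⇑T) f n ω ≤ mxT (⇑T) f n ω := by
  cases n with
  | zero => simp [mxT, ps_zero]
  | succ n => exact le_max_right _ _

lemma mx_meas {f : Ω → ℝ} (hf : Measurable f) (n : ℕ) : Measurable (mxT (⇑T) f n) := by
  induction n with
  | zero => simpa [mxT] using measurable_const
  | succ n ih => exact ih.max (ps_meas T hf (n+1))

lemma mx_int (hT : MeasurePreserving (⇑T) μ μ) {f : Ω → ℝ} (hfi : Integrable f μ) (n : ℕ) :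
    Integrable (mxT (⇑T) f n) μ := by
  induction n with
  | zero => simpa [mxT] using integrable_const (0:ℝ)
  | succ n ih =>
    have := ih.sup (ps_int T hT hfi (n+1))
    simpa [mxT, Pi.sup_def] using this

lemma mx_key (f : Ω → ℝ) (n : ℕ) (ω : Ω) :
    mxT (⇑T) f n ω ≤ max 0 (f ω + mxT (⇑T) f n (T ω)) := by
  induction n with
  | zero => exact le_max_left _ _
  | succ n ih =>
    show max (mxT (⇑T) f n ω) (partialSumT (⇑T) f (n+1) ω) ≤ _
    apply max_le
    · refine ih.trans (max_le_max le_rfl (add_le_add le_rfl ?_))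
      exact mx_mono T f n (T ω)
    · calc partialSumT (⇑T) f (n+1) ω = f ω + partialSumT (⇑T) f n (T ω) := ps_succ T f n ω
        _ ≤ f ω + mxT (⇑T) f n (T ω) := add_le_add le_rfl (ps_le_mx T f n (T ω))
        _ ≤ f ω + mxT (⇑T) f (n+1) (T ω) := add_le_add le_rfl (mx_mono T f n (T ω))
        _ ≤ max 0 _ := le_max_right _ _

/-- Garsia's maximal ergodic lemma. -/
lemma garsia (hT : MeasurePreserving (⇑T) μ μ) {f : Ω → ℝ}
    (hf : Measurable f) (hfi : Integrable f μ) (n : ℕ) :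
    0 ≤ ∫ ω in {ω | 0 < mxT (⇑T) f n ω}, f ω ∂μ := by
  set A := {ω | 0 < mxT (⇑T) f n ω} with hA
  have hmx : Measurable (mxT (⇑T) f n) := mx_meas T hf n
  have hAm : MeasurableSet A := measurableSet_lt measurable_const hmx
  have hmxi : Integrable (mxT (⇑T) f n) μ := mx_int T hT hfi n
  have hmxTi : Integrable (fun ω => mxT (⇑T) f n (T ω)) μ := by
    have := (hT.integrable_comp_emb T.measurableEmbedding
      (g := mxT (⇑T) f n)).mpr hmxi
    simpa [Function.comp_def] using this
  have hpt : ∀ ω ∈ A, mxT (⇑T) f n ω - mxT (⇑T) f n (T ω) ≤ f ω := by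
    intro ω hω
    have hkey := mx_key T f n ω
    rcases le_max_iff.mp hkey with hle | hle
    · exact absurd hω (by simp only [hA, Set.mem_setOf_eq]; linarith)
    · linarith
  have h1 : ∫ ω in A, (mxT (⇑T) f n ω - mxT (⇑T) f n (T ω)) ∂μ ≤ ∫ ω in A, f ω ∂μ :=
    setIntegral_mono_on (hmxi.sub hmxTi).integrableOn hfi.integrableOn hAm hpt
  have h2 : ∫ ω in A, (mxT (⇑T) f n ω - mxT (⇑T) f n (T ω)) ∂μ
      = ∫ ω in A, mxT (⇑T) f n ω ∂μ - ∫ ω in A, mxT (⇑T) f n (T ω) ∂μ :=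
    integral_sub hmxi.integrableOn hmxTi.integrableOn
  have h3 : ∫ ω in A, mxT (⇑T) f n ω ∂μ = ∫ ω, mxT (⇑T) f n ω ∂μ := by
    have hc : ∫ ω in Aᶜ, mxT (⇑T) f n ω ∂μ = 0 := by
      apply setIntegral_eq_zero_of_forall_eq_zero
      intro ω hω
      have : ¬ (0 < mxT (⇑T) f n ω) := hω
      exact le_antisymm (not_lt.mp this) (mx_nonneg T f n ω)
    rw [← integral_add_compl hAm hmxi, hc, add_zero]
  have h4 : ∫ ω in A, mxT (⇑T) f n (T ω) ∂μ ≤ ∫ ω, mxT (⇑T) f n (T ω) ∂μ :=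
    setIntegral_le_integral hmxTi (Eventually.of_forall (fun ω => mx_nonneg T f n (T ω)))
  have h5 : ∫ ω, mxT (⇑T) f n (T ω) ∂μ = ∫ ω, mxT (⇑T) f n ω ∂μ :=
    hT.integral_comp T.measurableEmbedding _
  linarith

/-- The maximal ergodic inequality (weak (1,1) bound). -/
lemma maximal_ineq (hT : MeasurePreserving (⇑T) μ μ) {f : Ω → ℝ}
    (hf : Measurable f) (hfi : Integrable f μ) (hf0 : ∀ ω, 0 ≤ f ω)
    {lam : ℝ} (hlam : 0 < lam) :
    ENNReal.ofReal lam * μ {ω | ∃ N : ℕ, lam * (N+1) < partialSumT (⇑T) f (N+1) ω}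
      ≤ ENNReal.ofReal (∫ ω, f ω ∂μ) := by
  set g : Ω → ℝ := fun ω => f ω - lam with hg
  have hgm : Measurable g := hf.sub measurable_const
  have hgi : Integrable g μ := hfi.sub (integrable_const _)
  set A : ℕ → Set Ω := fun n => {ω | 0 < mxT (⇑T) g n ω} with hA
  have hmono : Monotone A := by
    apply monotone_nat_of_le_succ
    intro n ω hω
    exact lt_of_lt_of_le hω (mx_mono T g n ω)
  have hsub : {ω | ∃ N : ℕ, lam * (N+1) < partialSumT (⇑T) f (N+1) ω} ⊆ ⋃ n, A n := by
    rintro ω ⟨N, hN⟩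
    refine Set.mem_iUnion.mpr ⟨N+1, ?_⟩
    have hgs : partialSumT (⇑T) g (N+1) ω
        = partialSumT (⇑T) f (N+1) ω - lam * (N+1) := by
      simp only [partialSumT, hg, Finset.sum_sub_distrib, Finset.sum_const,
        Finset.card_range, nsmul_eq_mul]
      push_cast
      ring
    have hpos : 0 < partialSumT (⇑T) g (N+1) ω := by rw [hgs]; linarith
    exact lt_of_lt_of_le hpos (ps_le_mx T g (N+1) ω)
  have hbound : ∀ n, ENNReal.ofReal lam * μ (A n) ≤ ENNReal.ofReal (∫ ω, f ω ∂μ) := by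
    intro n
    have hg0 := garsia T hT hgm hgi n
    have hAn : MeasurableSet (A n) :=
      measurableSet_lt measurable_const (mx_meas T hgm n)
    have hsplit : ∫ ω in A n, g ω ∂μ
        = ∫ ω in A n, f ω ∂μ - lam * (μ (A n)).toReal := by
      have h1 : ∫ ω in A n, g ω ∂μ
          = ∫ ω in A n, f ω ∂μ - ∫ (_ : Ω) in A n, lam ∂μ :=
        integral_sub hfi.integrableOn (integrableOn_const (measure_ne_top μ _))
      rw [h1, setIntegral_const, smul_eq_mul, mul_comm]; rfl
    have hfle : ∫ ω in A n, f ω ∂μ ≤ ∫ ω, f ω ∂μ :=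
      setIntegral_le_integral hfi (Eventually.of_forall hf0)
    have hreal : lam * (μ (A n)).toReal ≤ ∫ ω, f ω ∂μ := by
      rw [hsplit] at hg0; linarith
    calc ENNReal.ofReal lam * μ (A n)
        = ENNReal.ofReal (lam * (μ (A n)).toReal) := by
          rw [ENNReal.ofReal_mul hlam.le, ENNReal.ofReal_toReal (measure_ne_top μ _)]
      _ ≤ _ := ENNReal.ofReal_le_ofReal hreal
  calc ENNReal.ofReal lam * μ {ω | ∃ N : ℕ, lam * (N+1) < partialSumT (⇑T) f (N+1) ω}
      ≤ ENNReal.ofReal lam * μ (⋃ n, A n) :=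
        mul_le_mul_right (measure_mono hsub) _
    _ = ENNReal.ofReal lam * ⨆ n, μ (A n) := by
        rw [hmono.directed_le.measure_iUnion]
    _ = ⨆ n, ENNReal.ofReal lam * μ (A n) := by rw [ENNReal.mul_iSup]
    _ ≤ _ := iSup_le hbound

/-- Tail integral bound under a weak-`q` hypothesis. -/
lemma tail_bound {h : Ω → ℝ} (hmeas : Measurable h) {q : ℝ} (hq : 1 < q)
    {s δ : ℝ} (hs : 0 < s) (hδ : 0 < δ)
    (hb : ∀ u, s ≤ u → μ {ω | u < |h ω|} ≤ ENNReal.ofReal (δ * u ^ (-q))) :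
    ∫⁻ ω, ENNReal.ofReal (if s < |h ω| then |h ω| else 0) ∂μ ≤
      ENNReal.ofReal (δ * (1 + 1/(q-1)) * s ^ (1-q)) := by
  set F : Ω → ℝ := fun ω => if s < |h ω| then |h ω| else 0 with hF
  have hFm : Measurable F :=
    Measurable.ite (measurableSet_lt measurable_const hmeas.abs) hmeas.abs measurable_const
  have hF0 : ∀ ω, 0 ≤ F ω := by
    intro ω; by_cases hc : s < |h ω| <;> simp [hF, hc, abs_nonneg]
  rw [lintegral_eq_lintegral_meas_lt μ (Eventually.of_forall hF0) hFm.aemeasurable]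
  have hGm : Measurable fun u : ℝ => ENNReal.ofReal (δ * max s u ^ (-q)) := by
    apply Measurable.ennreal_ofReal
    exact ((measurable_const.max measurable_id).pow measurable_const).const_mul δ
  have step : ∀ u ∈ Ioi (0:ℝ), μ {a | u < F a} ≤ ENNReal.ofReal (δ * (max s u) ^ (-q)) := by
    intro u hu
    have hsubset : {a | u < F a} ⊆ {ω | max s u < |h ω|} := by
      intro a ha
      simp only [Set.mem_setOf_eq, hF] at ha ⊢
      by_cases hc : s < |h a|
      · rw [if_pos hc] at ha
        exact max_lt hc ha
      · rw [if_neg hc] at ha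
        exact absurd (hu.trans ha) (lt_irrefl 0)
    exact (measure_mono hsubset).trans (hb _ (le_max_left s u))
  have hmain : ∫⁻ u in Ioi (0:ℝ), μ {a | u < F a}
      ≤ ∫⁻ u in Ioi (0:ℝ), ENNReal.ofReal (δ * (max s u) ^ (-q)) :=
    setLIntegral_mono hGm step
  refine hmain.trans ?_
  rw [← Set.Ioc_union_Ioi_eq_Ioi hs.le,
    lintegral_union measurableSet_Ioi (Set.Ioc_disjoint_Ioi le_rfl)]
  have part1 : ∫⁻ u in Ioc (0:ℝ) s, ENNReal.ofReal (δ * (max s u) ^ (-q))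
      = ENNReal.ofReal (δ * s ^ (1-q)) := by
    have hcongr : ∫⁻ u in Ioc (0:ℝ) s, ENNReal.ofReal (δ * (max s u) ^ (-q))
        = ∫⁻ _ in Ioc (0:ℝ) s, ENNReal.ofReal (δ * s ^ (-q)) := by
      apply setLIntegral_congr_fun_ae measurableSet_Ioc
      apply Eventually.of_forall
      intro u hu
      rw [max_eq_left hu.2]
    rw [hcongr, setLIntegral_const, Real.volume_Ioc, sub_zero,
      ← ENNReal.ofReal_mul (mul_nonneg hδ.le (Real.rpow_pos_of_pos hs _).le)]
    congr 1
    rw [show (1:ℝ)-q = -q + 1 by ring, Real.rpow_add hs, Real.rpow_one]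
    ring
  have part2 : ∫⁻ u in Ioi s, ENNReal.ofReal (δ * (max s u) ^ (-q))
      ≤ ENNReal.ofReal (δ * (1/(q-1)) * s ^ (1-q)) := by
    have hcongr : ∫⁻ u in Ioi s, ENNReal.ofReal (δ * (max s u) ^ (-q))
        = ∫⁻ u in Ioi s, ENNReal.ofReal (δ * u ^ (-q)) := by
      apply setLIntegral_congr_fun_ae measurableSet_Ioi
      apply Eventually.of_forall
      intro u hu
      rw [max_eq_right (le_of_lt hu)]
    have hint : IntegrableOn (fun u : ℝ => δ * u ^ (-q)) (Ioi s) volume :=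
      (integrableOn_Ioi_rpow_of_lt (by linarith) hs).const_mul δ
    have hnn : 0 ≤ᵐ[volume.restrict (Ioi s)] fun u : ℝ => δ * u ^ (-q) := by
      filter_upwards [ae_restrict_mem measurableSet_Ioi] with u hu
      have : (0:ℝ) < u := hs.trans hu
      positivity
    rw [hcongr, ← ofReal_integral_eq_lintegral_ofReal hint hnn]
    apply ENNReal.ofReal_le_ofReal
    rw [integral_const_mul, integral_Ioi_rpow_of_lt (by linarith) hs,
      show -q + 1 = 1 - q by ring,
      show -s ^ (1-q) / (1-q) = s ^ (1-q) * (1/(q-1)) by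
        have hq1 : q - 1 ≠ 0 := by linarith
        have h1q : 1 - q ≠ 0 := by linarith
        field_simp
        ring]
    ring_nf
    exact le_refl _
  rw [part1]
  calc ENNReal.ofReal (δ * s ^ (1-q)) + ∫⁻ u in Ioi s, ENNReal.ofReal (δ * (max s u) ^ (-q))
      ≤ ENNReal.ofReal (δ * s ^ (1-q)) + ENNReal.ofReal (δ * (1/(q-1)) * s ^ (1-q)) :=
        add_le_add le_rfl part2
    _ = ENNReal.ofReal (δ * (1 + 1/(q-1)) * s ^ (1-q)) := by
        have h2 : (0:ℝ) < s ^ (1-q) := Real.rpow_pos_of_pos hs _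
        have h1 : (0:ℝ) < 1/(q-1) := div_pos one_pos (by linarith)
        rw [← ENNReal.ofReal_add (mul_nonneg hδ.le h2.le)
          (mul_nonneg (mul_nonneg hδ.le h1.le) h2.le)]
        congr 1; ring

end Aux

/-- **Lemma 3.1 (i)**: if `h ∈ 𝕃₀^{q,∞}` then `M*(h) ∈ 𝕃₀^{q,∞}`. -/
theorem stmt10 {Ω : Type*} [MeasurableSpace Ω] (μ : Measure Ω) [IsProbabilityMeasure μ]
    (T : Ω ≃ᵐ Ω) (hT : MeasurePreserving (⇑T) μ μ)
    (q : ℝ) (hq : 1 < q)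
    (h : Ω → ℝ) (hmeas : Measurable h)
    (hweak : Tendsto (fun t : ℝ => ENNReal.ofReal (t ^ q) * μ {ω | t < |h ω|})
      atTop (𝓝 0)) :
    Tendsto (fun t : ℝ =>
        ENNReal.ofReal (t ^ q) * μ {ω | ENNReal.ofReal t < maxFn (⇑T) h ω})
      atTop (𝓝 0) := by
  rw [ENNReal.tendsto_nhds_zero]
  intro ε hε
  obtain ⟨δ, hδ, hδε⟩ : ∃ δ : ℝ, 0 < δ ∧ ENNReal.ofReal δ ≤ ε := by
    rcases eq_or_ne ε ⊤ with rfl | hne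
    · exact ⟨1, one_pos, le_top⟩
    · exact ⟨ε.toReal, ENNReal.toReal_pos hε.ne' hne, by rw [ENNReal.ofReal_toReal hne]⟩
  have h2q : (0:ℝ) < 2 ^ q := Real.rpow_pos_of_pos two_pos q
  set c : ℝ := δ * (q - 1) / (q * 2 ^ q) with hc
  have hcpos : 0 < c := by
    apply div_pos (mul_pos hδ (by linarith)) (mul_pos (by linarith) h2q)
  obtain ⟨a, ha⟩ := eventually_atTop.mp
    ((ENNReal.tendsto_nhds_zero.mp hweak) (ENNReal.ofReal c) (ENNReal.ofReal_pos.mpr hcpos))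
  filter_upwards [eventually_ge_atTop (max 2 (2*a))] with t ht
  have ht2 : (2:ℝ) ≤ t := le_trans (le_max_left _ _) ht
  have hta : 2*a ≤ t := le_trans (le_max_right _ _) ht
  have htpos : (0:ℝ) < t := by linarith
  set s := t/2 with hs
  have hs1 : (1:ℝ) ≤ s := by rw [hs]; linarith
  have hspos : (0:ℝ) < s := by linarith
  have hsa : a ≤ s := by rw [hs]; linarith
  have hts : t = 2 * s := by rw [hs]; ring
  -- the truncation
  set F : Ω → ℝ := fun ω => if s < |h ω| then |h ω| else 0 with hF
  have hFm : Measurable F :=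
    Measurable.ite (measurableSet_lt measurable_const hmeas.abs) hmeas.abs measurable_const
  have hF0 : ∀ ω, 0 ≤ F ω := by
    intro ω; by_cases hcc : s < |h ω| <;> simp [hF, hcc, abs_nonneg]
  -- weak-bound on tails
  have hb : ∀ u, s ≤ u → μ {ω | u < |h ω|} ≤ ENNReal.ofReal (c * u ^ (-q)) := by
    intro u hu
    have hupos : (0:ℝ) < u := lt_of_lt_of_le hspos hu
    have h1 := ha u (hsa.trans hu)
    have huq : (0:ℝ) < u ^ q := Real.rpow_pos_of_pos hupos q
    rw [show c * u^(-q) = c / u^q by rw [Real.rpow_neg hupos.le]; ring,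
      ENNReal.ofReal_div_of_pos huq]
    rw [ENNReal.le_div_iff_mul_le
      (Or.inl (by simp [ENNReal.ofReal_pos.mpr huq, ne_of_gt]))
      (Or.inl ENNReal.ofReal_ne_top)]
    rw [mul_comm]
    exact h1
  have htail := tail_bound (μ := μ) hmeas hq hspos hcpos hb
  have hFi : Integrable F μ := by
    refine ⟨hFm.aestronglyMeasurable, ?_⟩
    rw [hasFiniteIntegral_iff_ofReal (Eventually.of_forall hF0)]
    exact lt_of_le_of_lt htail ENNReal.ofReal_lt_top
  have hintF : ∫ ω, F ω ∂μ ≤ c * (1 + 1/(q-1)) * s ^ (1-q) := by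
    have heq : ENNReal.ofReal (∫ ω, F ω ∂μ) = ∫⁻ ω, ENNReal.ofReal (F ω) ∂μ :=
      ofReal_integral_eq_lintegral_ofReal hFi (Eventually.of_forall hF0)
    have hb' : (0:ℝ) ≤ c * (1 + 1/(q-1)) * s ^ (1-q) := by
      have h1 : (0:ℝ) < 1/(q-1) := div_pos one_pos (by linarith)
      have h2 : (0:ℝ) < s ^ (1-q) := Real.rpow_pos_of_pos hspos _
      exact mul_nonneg (mul_nonneg hcpos.le (by linarith)) h2.le
    exact (ENNReal.ofReal_le_ofReal_iff hb').mp (heq ▸ htail)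
  have hmax := maximal_ineq T hT hFm hFi hF0 hspos
  -- set inclusion
  have hincl : {ω | ENNReal.ofReal t < maxFn (⇑T) h ω}
      ⊆ {ω | ∃ N : ℕ, s * (N+1) < partialSumT (⇑T) F (N+1) ω} := by
    intro ω hω
    simp only [Set.mem_setOf_eq, maxFn] at hω
    obtain ⟨N, hN⟩ := lt_iSup_iff.mp hω
    have hNr : t * (N+1) < |partialSumT (⇑T) h (N+1) ω| := by
      have h1 : ENNReal.ofReal t * ((N:ℝ≥0∞)+1) < (‖partialSumT (⇑T) h (N+1) ω‖₊ : ℝ≥0∞) :=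
        (ENNReal.lt_div_iff_mul_lt (Or.inl (by simp)) (Or.inl (by simp))).mp hN
      have h2 : ((N:ℝ≥0∞)+1) = ENNReal.ofReal ((N:ℝ)+1) := by
        rw [ENNReal.ofReal_add (Nat.cast_nonneg N) zero_le_one,
          ENNReal.ofReal_natCast, ENNReal.ofReal_one]
      have h3 : (‖partialSumT (⇑T) h (N+1) ω‖₊ : ℝ≥0∞)
          = ENNReal.ofReal |partialSumT (⇑T) h (N+1) ω| := by
        rw [← Real.norm_eq_abs]; exact (ofReal_norm _).symm
      rw [h2, h3, ← ENNReal.ofReal_mul htpos.le] at h1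
      exact (ENNReal.ofReal_lt_ofReal_iff_of_nonneg (by positivity)).mp h1
    refine ⟨N, ?_⟩
    have hptw : ∀ x : Ω, |h x| ≤ s + F x := by
      intro x
      by_cases hx : s < |h x|
      · simp only [hF, if_pos hx]; linarith
      · simp only [hF, if_neg hx]; linarith [not_lt.mp hx]
    have key : |partialSumT (⇑T) h (N+1) ω| ≤ s * (N+1) + partialSumT (⇑T) F (N+1) ω := by
      calc |partialSumT (⇑T) h (N+1) ω|
          ≤ ∑ j ∈ Finset.range (N+1), |h (T^[j] ω)| := by
            apply Finset.abs_sum_le_sum_abs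
        _ ≤ ∑ j ∈ Finset.range (N+1), (s + F (T^[j] ω)) :=
            Finset.sum_le_sum (fun j _ => hptw _)
        _ = s * (N+1) + partialSumT (⇑T) F (N+1) ω := by
            rw [Finset.sum_add_distrib, Finset.sum_const, Finset.card_range,
              nsmul_eq_mul]
            simp only [partialSumT]
            push_cast
            ring
    nlinarith [hNr, key]
  -- final computation
  have harith : t^q / s * (c * (1 + 1/(q-1)) * s ^ (1-q)) = δ := by
    have e1 : t ^ q = 2^q * s^q := by
      rw [hts, Real.mul_rpow (by norm_num) hspos.le]
    have e2 : s^q * s^(1-q) = s := by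
      rw [← Real.rpow_add hspos]
      norm_num
    have e3 : c * (1 + 1/(q-1)) = δ / 2^q := by
      rw [hc]
      have : q - 1 ≠ 0 := by linarith
      have : q ≠ 0 := by linarith
      field_simp
      ring
    have hs' : s ≠ 0 := ne_of_gt hspos
    have h2q' : (2:ℝ)^q ≠ 0 := ne_of_gt h2q
    rw [e1, e3]
    have e4 : 2^q * s^q / s * (δ / 2^q * s^(1-q)) = δ * (s^q * s^(1-q)) / s := by
      field_simp
    rw [e4, e2, mul_div_assoc, div_self hs', mul_one]
  calc ENNReal.ofReal (t^q) * μ {ω | ENNReal.ofReal t < maxFn (⇑T) h ω}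
      ≤ ENNReal.ofReal (t^q) * μ {ω | ∃ N : ℕ, s * (N+1) < partialSumT (⇑T) F (N+1) ω} :=
        mul_le_mul_right (measure_mono hincl) _
    _ = ENNReal.ofReal (t^q / s) *
        (ENNReal.ofReal s * μ {ω | ∃ N : ℕ, s * (N+1) < partialSumT (⇑T) F (N+1) ω}) := by
        rw [← mul_assoc, ← ENNReal.ofReal_mul
          (div_nonneg (Real.rpow_pos_of_pos htpos q).le hspos.le),
          div_mul_cancel₀ _ (ne_of_gt hspos)]
    _ ≤ ENNReal.ofReal (t^q / s) * ENNReal.ofReal (∫ ω, F ω ∂μ) :=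
        mul_le_mul_right hmax _
    _ = ENNReal.ofReal (t^q / s * ∫ ω, F ω ∂μ) := (ENNReal.ofReal_mul
          (div_nonneg (Real.rpow_pos_of_pos htpos q).le hspos.le)).symm
    _ ≤ ENNReal.ofReal (t^q / s * (c * (1 + 1/(q-1)) * s ^ (1-q))) := by
        apply ENNReal.ofReal_le_ofReal
        exact mul_le_mul_of_nonneg_left hintF
          (div_nonneg (Real.rpow_pos_of_pos htpos q).le hspos.le)
    _ = ENNReal.ofReal δ := by rw [harith]
    _ ≤ ε := hδε
end
end

section
/- Let q > 1 and let h : Ω → ℝ be integrable. Then for every t > 0, t · (μ{M*(h) ≥ t})^{1/q} ≤ (q/(q−1)) · ‖h · 1_{A_t}‖_{q,∞}, where A_t := {M*(h) ≥ t} and ‖h·1_{A_t}‖_{q,∞} := sup_{s>0} s · (μ({|h| > s} ∩ A_t))^{1/q}. -/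
open MeasureTheory Filter Topology
open scoped ENNReal NNReal

noncomputable section

/-- running maximum `max_{0 ≤ n ≤ N} S_n f`. -/
def mOf {Ω : Type*} (T : Ω → Ω) (f : Ω → ℝ) : ℕ → Ω → ℝ
  | 0 => fun _ => 0
  | (N + 1) => fun ω => max (mOf T f N ω) (partialSumT T f (N + 1) ω)

namespace Aux

variable {Ω : Type*} [MeasurableSpace Ω] {μ : Measure Ω}
variable {T : Ω → Ω} {f h : Ω → ℝ}

lemma partialSumT_succ (T : Ω → Ω) (f : Ω → ℝ) (n : ℕ) (ω : Ω) :
    partialSumT T f (n + 1) ω = f ω + partialSumT T f n (T ω) := by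
  simp only [partialSumT, Finset.sum_range_succ']
  simp [Function.iterate_succ_apply, add_comm]

lemma measurable_partialSumT (hT : Measurable T) (hf : Measurable f) (n : ℕ) :
    Measurable (partialSumT T f n) := by
  apply Finset.measurable_sum
  exact fun j _ => hf.comp (hT.iterate j)

lemma integrable_partialSumT (hT : MeasurePreserving T μ μ) (hf : Integrable f μ) (n : ℕ) :
    Integrable (partialSumT T f n) μ := by
  apply integrable_finset_sum
  exact fun j _ => ((hT.iterate j).integrable_comp hf.aestronglyMeasurable).mpr hf

lemma mOf_nonneg (N : ℕ) (ω : Ω) : 0 ≤ mOf T f N ω := by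
  induction N with
  | zero => simp [mOf]
  | succ N ih => exact le_max_of_le_left ih

lemma measurable_mOf (hT : Measurable T) (hf : Measurable f) (N : ℕ) :
    Measurable (mOf T f N) := by
  induction N with
  | zero => simpa [mOf] using measurable_const
  | succ N ih => exact ih.max (measurable_partialSumT hT hf (N + 1))

lemma integrable_mOf (hT : MeasurePreserving T μ μ) (hTm : Measurable T)
    (hf : Integrable f μ) (hfm : Measurable f) (N : ℕ) :
    Integrable (mOf T f N) μ := by
  induction N with
  | zero => simpa [mOf] using integrable_const (0 : ℝ)
  | succ N ih =>
    have : Integrable (fun ω => max (mOf T f N ω) (partialSumT T f (N + 1) ω)) μ := by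
      exact ih.sup (integrable_partialSumT hT hf (N + 1))
    exact this

lemma partialSumT_le_mOf (N : ℕ) (ω : Ω) : ∀ n ≤ N, partialSumT T f n ω ≤ mOf T f N ω := by
  induction N with
  | zero => intro n hn; interval_cases n; simp [partialSumT, mOf]
  | succ N ih =>
    intro n hn
    rcases Nat.lt_succ_iff_lt_or_eq.mp (Nat.lt_succ_of_le hn) with hlt | rfl
    · exact le_max_of_le_left (ih n (Nat.lt_succ_iff.mp hlt))
    · exact le_max_right _ _

lemma exists_pos_of_mOf_pos {N : ℕ} {ω : Ω} (hpos : 0 < mOf T f N ω) :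
    ∃ n ≤ N, 0 < partialSumT T f n ω := by
  induction N with
  | zero => simp [mOf] at hpos
  | succ N ih =>
    rcases lt_max_iff.mp hpos with h1 | h2
    · obtain ⟨n, hn, hp⟩ := ih h1
      exact ⟨n, hn.trans (Nat.le_succ N), hp⟩
    · exact ⟨N + 1, le_rfl, h2⟩

lemma mOf_succ_le (N : ℕ) (ω : Ω) :
    mOf T f (N + 1) ω ≤ max 0 (f ω + mOf T f N (T ω)) := by
  induction N with
  | zero =>
    simp only [mOf]
    refine max_le (by simp) (le_max_of_le_right ?_)
    simp [partialSumT_succ, mOf, partialSumT]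
  | succ N ih =>
    show max (mOf T f (N + 1) ω) (partialSumT T f (N + 2) ω) ≤ _
    refine max_le (ih.trans (max_le_max le_rfl (add_le_add_right ?_ _))) (le_max_of_le_right ?_)
    · exact le_max_left _ _
    · rw [partialSumT_succ]
      exact add_le_add_right (partialSumT_le_mOf (N + 1) (T ω) (N + 1) le_rfl) _

/-- key pointwise inequality for Garsia's proof -/
lemma mOf_diff_le_indicator (N : ℕ) (ω : Ω) :
    mOf T f N ω - mOf T f N (T ω) ≤
      Set.indicator {ω | 0 < mOf T f N ω} f ω := by
  by_cases hω : 0 < mOf T f N ω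
  · rw [Set.indicator_apply, if_pos (Set.mem_setOf_eq ▸ hω)]
    cases N with
    | zero => simp [mOf] at hω
    | succ N =>
      have h1 := mOf_succ_le (T := T) (f := f) N ω
      have h2 : mOf T f (N + 1) ω ≤ f ω + mOf T f N (T ω) := by
        rcases max_cases (0 : ℝ) (f ω + mOf T f N (T ω)) with ⟨he, _⟩ | ⟨he, _⟩
        · rw [he] at h1; linarith
        · rwa [he] at h1
      have h3 : mOf T f N (T ω) ≤ mOf T f (N + 1) (T ω) := le_max_left _ _
      linarith
  · rw [Set.indicator_apply, if_neg (by simpa using hω)]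
    push_neg at hω
    have h0 := mOf_nonneg (T := T) (f := f) N ω
    have h1 := mOf_nonneg (T := T) (f := f) N (T ω)
    linarith

lemma integral_comp_T (hT : MeasurePreserving T μ μ) (g : Ω → ℝ)
    (hg : AEStronglyMeasurable g μ) : ∫ ω, g (T ω) ∂μ = ∫ ω, g ω ∂μ := by
  have h2 : AEStronglyMeasurable g (Measure.map T μ) := by rwa [hT.map_eq]
  have := MeasureTheory.integral_map hT.measurable.aemeasurable h2
  rw [hT.map_eq] at this
  exact this.symm

lemma hopf_finite (hT : MeasurePreserving T μ μ) (hTm : Measurable T)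
    (hf : Integrable f μ) (hfm : Measurable f) (N : ℕ) :
    0 ≤ ∫ ω, Set.indicator {ω | 0 < mOf T f N ω} f ω ∂μ := by
  have hE : MeasurableSet {ω | 0 < mOf T f N ω} :=
    measurableSet_lt measurable_const (measurable_mOf hTm hfm N)
  have hM := integrable_mOf hT hTm hf hfm N
  have hMT : Integrable (fun ω => mOf T f N (T ω)) μ :=
    (hT.integrable_comp hM.aestronglyMeasurable).mpr hM
  have h0 : ∫ ω, (mOf T f N ω - mOf T f N (T ω)) ∂μ = 0 := by
    rw [integral_sub hM hMT]
    rw [integral_comp_T hT _ hM.aestronglyMeasurable, sub_self]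
  calc (0:ℝ) = _ := h0.symm
    _ ≤ _ := integral_mono (hM.sub hMT) (hf.indicator hE) (mOf_diff_le_indicator N)

/-- Hopf's maximal ergodic lemma. -/
lemma hopf (hT : MeasurePreserving T μ μ) (hTm : Measurable T)
    (hf : Integrable f μ) (hfm : Measurable f) :
    0 ≤ ∫ ω, Set.indicator {ω | ∃ n, 0 < partialSumT T f (n + 1) ω} f ω ∂μ := by
  set E := {ω | ∃ n, 0 < partialSumT T f (n + 1) ω} with hE
  have hEmeas : MeasurableSet E := by
    have he : E = ⋃ n, {ω | 0 < partialSumT T f (n + 1) ω} := by ext ω; simp [hE]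
    rw [he]
    exact MeasurableSet.iUnion fun n =>
      measurableSet_lt measurable_const (measurable_partialSumT hTm hfm (n + 1))
  have hlim : ∀ ω, Tendsto (fun N => Set.indicator {ω | 0 < mOf T f N ω} f ω) atTop
      (𝓝 (Set.indicator E f ω)) := by
    intro ω
    by_cases hω : ω ∈ E
    · rw [Set.indicator_of_mem hω]
      obtain ⟨n, hn⟩ := hω
      apply tendsto_const_nhds.congr'
      filter_upwards [eventually_ge_atTop (n + 1)] with N hN
      have : 0 < mOf T f N ω := lt_of_lt_of_le hn (partialSumT_le_mOf N ω (n + 1) hN)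
      exact (Set.indicator_of_mem (show ω ∈ {ω | 0 < mOf T f N ω} from this) f).symm
    · rw [Set.indicator_of_notMem hω]
      apply tendsto_const_nhds.congr fun N => ?_
      have : ¬ (0 < mOf T f N ω) := by
        intro hpos
        obtain ⟨m, hm, hp⟩ := exists_pos_of_mOf_pos hpos
        cases m with
        | zero => simp [partialSumT] at hp
        | succ m => exact hω ⟨m, hp⟩
      exact (Set.indicator_of_notMem (show ω ∉ {ω | 0 < mOf T f N ω} from this) f).symm
  have hconv : Tendsto (fun N => ∫ ω, Set.indicator {ω | 0 < mOf T f N ω} f ω ∂μ) atTop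
      (𝓝 (∫ ω, Set.indicator E f ω ∂μ)) := by
    apply tendsto_integral_of_dominated_convergence (fun ω => |f ω|)
    · intro N
      exact hf.aestronglyMeasurable.indicator
        (measurableSet_lt measurable_const (measurable_mOf hTm hfm N))
    · exact hf.abs
    · intro N
      filter_upwards with ω
      rw [Real.norm_eq_abs, Set.indicator_apply]
      split_ifs <;> simp
    · filter_upwards with ω using hlim ω
  exact ge_of_tendsto hconv (Eventually.of_forall fun N => hopf_finite hT hTm hf hfm N)

lemma partialSumT_sub_const (T : Ω → Ω) (h : Ω → ℝ) (c : ℝ) (n : ℕ) (ω : Ω) :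
    partialSumT T (fun ω => h ω - c) n ω = partialSumT T h n ω - n * c := by
  simp [partialSumT, Finset.sum_sub_distrib, mul_comm]

lemma partialSumT_neg (T : Ω → Ω) (h : Ω → ℝ) (n : ℕ) (ω : Ω) :
    partialSumT T (fun ω => -h ω) n ω = -partialSumT T h n ω := by
  simp [partialSumT]

lemma measurableSet_P (hTm : Measurable T) (hm : Measurable h) (t' : ℝ) :
    MeasurableSet {ω | ∃ n : ℕ, ((n : ℝ) + 1) * t' < partialSumT T h (n + 1) ω} := by
  have he : {ω | ∃ n : ℕ, ((n : ℝ) + 1) * t' < partialSumT T h (n + 1) ω}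
      = ⋃ n : ℕ, {ω | ((n : ℝ) + 1) * t' < partialSumT T h (n + 1) ω} := by
    ext ω; simp
  rw [he]
  exact MeasurableSet.iUnion fun n =>
    measurableSet_lt measurable_const (measurable_partialSumT hTm hm (n + 1))

lemma hopf_application [IsFiniteMeasure μ] (hT : MeasurePreserving T μ μ) (hTm : Measurable T)
    (hf : Integrable h μ) (hm : Measurable h) (t' : ℝ) :
    t' * (μ {ω | ∃ n : ℕ, ((n : ℝ) + 1) * t' < partialSumT T h (n + 1) ω}).toReal
      ≤ ∫ ω, Set.indicator {ω | ∃ n : ℕ, ((n : ℝ) + 1) * t' < partialSumT T h (n + 1) ω} h ω ∂μ := by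
  set P := {ω | ∃ n : ℕ, ((n : ℝ) + 1) * t' < partialSumT T h (n + 1) ω} with hPdef
  have hP : MeasurableSet P := measurableSet_P hTm hm t'
  have h1 := hopf (f := fun ω => h ω - t') hT hTm (hf.sub (integrable_const t'))
    (hm.sub measurable_const)
  have hset : {ω | ∃ n : ℕ, 0 < partialSumT T (fun ω => h ω - t') (n + 1) ω} = P := by
    ext ω
    simp only [hPdef, Set.mem_setOf_eq, partialSumT_sub_const, sub_pos]
    constructor
    · rintro ⟨n, hn⟩; exact ⟨n, by push_cast at hn ⊢; linarith⟩
    · rintro ⟨n, hn⟩; exact ⟨n, by push_cast at hn ⊢; linarith⟩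
  rw [hset] at h1
  have hfun : (fun ω => Set.indicator P (fun ω => h ω - t') ω)
      = fun ω => Set.indicator P h ω - Set.indicator P (fun _ => t') ω := by
    funext ω
    by_cases hmem : ω ∈ P
    · rw [Set.indicator_of_mem hmem, Set.indicator_of_mem hmem, Set.indicator_of_mem hmem]
    · rw [Set.indicator_of_notMem hmem, Set.indicator_of_notMem hmem,
        Set.indicator_of_notMem hmem]
      simp
  rw [hfun] at h1
  rw [integral_sub (hf.indicator hP) ((integrable_const t').indicator hP)] at h1
  rw [integral_indicator_const t' hP] at h1
  simp only [smul_eq_mul, measureReal_def] at h1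
  linarith [h1]

lemma measurable_maxFn (hTm : Measurable T) (hm : Measurable h) :
    Measurable (maxFn T h) := by
  apply Measurable.iSup
  intro N
  exact ((measurable_partialSumT hTm hm (N + 1)).nnnorm.coe_nnreal_ennreal).div measurable_const

lemma ofReal_le_term {x t' : ℝ} (ht' : 0 ≤ t') {n : ℕ} (hle : ((n : ℝ) + 1) * t' ≤ |x|) :
    ENNReal.ofReal t' ≤ (‖x‖₊ : ℝ≥0∞) / ((n : ℝ≥0∞) + 1) := by
  rw [ENNReal.le_div_iff_mul_le (Or.inl (by simp)) (Or.inl (by simp))]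
  have hx : (‖x‖₊ : ℝ≥0∞) = ENNReal.ofReal |x| := by
    rw [← Real.norm_eq_abs, ofReal_norm, enorm_eq_nnnorm]
  rw [hx]
  calc ENNReal.ofReal t' * ((n : ℝ≥0∞) + 1)
      = ENNReal.ofReal t' * ENNReal.ofReal ((n : ℝ) + 1) := by
        congr 1; rw [ENNReal.ofReal_add (by positivity) zero_le_one]; simp
    _ = ENNReal.ofReal (t' * ((n : ℝ) + 1)) := (ENNReal.ofReal_mul ht').symm
    _ ≤ ENNReal.ofReal |x| := ENNReal.ofReal_le_ofReal (by linarith [hle, mul_comm t' ((n:ℝ)+1)])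

lemma term_le_ofReal {x t' : ℝ} {n : ℕ} (hle : |x| ≤ ((n : ℝ) + 1) * t') :
    (‖x‖₊ : ℝ≥0∞) / ((n : ℝ≥0∞) + 1) ≤ ENNReal.ofReal t' := by
  rw [ENNReal.div_le_iff (by simp) (by simp)]
  have hx : (‖x‖₊ : ℝ≥0∞) = ENNReal.ofReal |x| := by
    rw [← Real.norm_eq_abs, ofReal_norm, enorm_eq_nnnorm]
  rw [hx]
  have ht' : 0 ≤ t' := by nlinarith [abs_nonneg x]
  calc ENNReal.ofReal |x| ≤ ENNReal.ofReal (((n : ℝ) + 1) * t') := ENNReal.ofReal_le_ofReal hle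
    _ = ENNReal.ofReal ((n : ℝ) + 1) * ENNReal.ofReal t' := ENNReal.ofReal_mul (by positivity)
    _ = ENNReal.ofReal t' * ((n : ℝ≥0∞) + 1) := by
        rw [mul_comm]; congr 1; rw [ENNReal.ofReal_add (by positivity) zero_le_one]; simp

lemma wiener_step [IsFiniteMeasure μ] (hT : MeasurePreserving T μ μ) (hTm : Measurable T)
    (hint : Integrable h μ) (hmeas : Measurable h) {t t' : ℝ} (ht' : 0 < t') (htt : t' < t) :
    t' * (μ {ω | ENNReal.ofReal t ≤ maxFn T h ω}).toReal
      ≤ ∫ ω, Set.indicator {ω | ENNReal.ofReal t' ≤ maxFn T h ω} (fun ω => |h ω|) ω ∂μ := by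
  set A := {ω | ENNReal.ofReal t ≤ maxFn T h ω} with hAdef
  set A' := {ω | ENNReal.ofReal t' ≤ maxFn T h ω} with hA'def
  set P := {ω | ∃ n : ℕ, ((n : ℝ) + 1) * t' < partialSumT T h (n + 1) ω} with hPdef
  set Nn := {ω | ∃ n : ℕ, ((n : ℝ) + 1) * t' < partialSumT T (fun ω => -h ω) (n + 1) ω}
    with hNdef
  have hP : MeasurableSet P := measurableSet_P hTm hmeas t'
  have hNm : MeasurableSet Nn := measurableSet_P hTm hmeas.neg t'
  have hA' : MeasurableSet A' := measurableSet_le measurable_const (measurable_maxFn hTm hmeas)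
  have hPA' : P ⊆ A' := by
    rintro ω ⟨n, hn⟩
    refine le_trans (ofReal_le_term ht'.le (x := partialSumT T h (n + 1) ω)
      (le_trans hn.le (le_abs_self _))) ?_
    exact le_iSup (fun N : ℕ => (‖partialSumT T h (N + 1) ω‖₊ : ℝ≥0∞) / ((N : ℝ≥0∞) + 1)) n
  have hNA' : Nn ⊆ A' := by
    rintro ω ⟨n, hn⟩
    rw [partialSumT_neg] at hn
    refine le_trans (ofReal_le_term ht'.le (x := partialSumT T h (n + 1) ω)
      (le_trans hn.le (neg_le_abs _))) ?_
    exact le_iSup (fun N : ℕ => (‖partialSumT T h (N + 1) ω‖₊ : ℝ≥0∞) / ((N : ℝ≥0∞) + 1)) n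
  have hA_sub : A ⊆ P ∪ Nn := by
    intro ω hω
    by_contra hc
    rw [Set.mem_union] at hc
    push_neg at hc
    obtain ⟨hcP, hcN⟩ := hc
    simp only [hPdef, hNdef, Set.mem_setOf_eq, not_exists, not_lt, partialSumT_neg] at hcP hcN
    have hbound : maxFn T h ω ≤ ENNReal.ofReal t' := by
      refine iSup_le fun n => term_le_ofReal (abs_le.mpr ⟨?_, hcP n⟩)
      linarith [hcN n]
    have : ENNReal.ofReal t ≤ ENNReal.ofReal t' := le_trans hω hbound
    rw [ENNReal.ofReal_le_ofReal_iff ht'.le] at this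
    linarith
  have hμ : (μ A).toReal ≤ (μ P).toReal + (μ Nn).toReal := by
    rw [← ENNReal.toReal_add (measure_ne_top μ P) (measure_ne_top μ Nn)]
    exact ENNReal.toReal_mono
      (ENNReal.add_ne_top.mpr ⟨measure_ne_top μ P, measure_ne_top μ Nn⟩)
      ((measure_mono hA_sub).trans (measure_union_le P Nn))
  have h1 := hopf_application hT hTm hint hmeas t'
  have h2 := hopf_application (h := fun ω => -h ω) hT hTm hint.neg hmeas.neg t'
  have hpt : ∀ ω, Set.indicator P h ω + Set.indicator Nn (fun ω => -h ω) ω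
      ≤ Set.indicator A' (fun ω => |h ω|) ω := by
    intro ω
    by_cases hωP : ω ∈ P <;> by_cases hωN : ω ∈ Nn
    · rw [Set.indicator_of_mem hωP, Set.indicator_of_mem hωN,
        Set.indicator_of_mem (hPA' hωP)]
      simp [abs_nonneg]
    · rw [Set.indicator_of_mem hωP, Set.indicator_of_notMem hωN,
        Set.indicator_of_mem (hPA' hωP)]
      simp [le_abs_self]
    · rw [Set.indicator_of_notMem hωP, Set.indicator_of_mem hωN,
        Set.indicator_of_mem (hNA' hωN)]
      simp [neg_le_abs]
    · rw [Set.indicator_of_notMem hωP, Set.indicator_of_notMem hωN]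
      simp only [add_zero]
      exact Set.indicator_nonneg (fun ω _ => abs_nonneg (h ω)) ω
  have hIP : Integrable (Set.indicator P h) μ := hint.indicator hP
  have hIN : Integrable (Set.indicator Nn fun ω => -h ω) μ := hint.neg.indicator hNm
  have hsum : ∫ ω, (Set.indicator P h ω + Set.indicator Nn (fun ω => -h ω) ω) ∂μ
      ≤ ∫ ω, Set.indicator A' (fun ω => |h ω|) ω ∂μ :=
    integral_mono (hIP.add hIN) (hint.abs.indicator hA') hpt
  rw [integral_add hIP hIN] at hsum
  calc t' * (μ A).toReal ≤ t' * ((μ P).toReal + (μ Nn).toReal) := by nlinarith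
    _ = t' * (μ P).toReal + t' * (μ Nn).toReal := by ring
    _ ≤ ∫ ω, Set.indicator P h ω ∂μ + ∫ ω, Set.indicator Nn (fun ω => -h ω) ω ∂μ := by
        exact add_le_add h1 h2
    _ ≤ _ := hsum

lemma maximal_ineq [IsFiniteMeasure μ] (hT : MeasurePreserving T μ μ) (hTm : Measurable T)
    (hint : Integrable h μ) (hmeas : Measurable h) {t : ℝ} (ht : 0 < t) :
    ENNReal.ofReal t * μ {ω | ENNReal.ofReal t ≤ maxFn T h ω}
      ≤ ∫⁻ ω in {ω | ENNReal.ofReal t ≤ maxFn T h ω}, ENNReal.ofReal |h ω| ∂μ := by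
  set A := {ω | ENNReal.ofReal t ≤ maxFn T h ω} with hAdef
  have hA : MeasurableSet A := measurableSet_le measurable_const (measurable_maxFn hTm hmeas)
  set u : ℕ → ℝ := fun k => t - t / (k + 2) with hu
  have hu_pos : ∀ k, 0 < u k := by
    intro k
    have h2 : t / ((k : ℝ) + 2) < t := by
      rw [div_lt_iff₀ (by positivity)]
      nlinarith [Nat.cast_nonneg (α := ℝ) k]
    simp only [hu]; linarith
  have hu_lt : ∀ k, u k < t := by
    intro k
    have : 0 < t / ((k : ℝ) + 2) := by positivity
    simp only [hu]; linarith
  have hu_tendsto : Tendsto u atTop (𝓝 t) := by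
    have h1 : Tendsto (fun k : ℕ => t / ((k : ℝ) + 2)) atTop (𝓝 0) := by
      apply Tendsto.div_atTop tendsto_const_nhds
      exact tendsto_atTop_add_const_right atTop 2 tendsto_natCast_atTop_atTop
    have := Tendsto.sub (tendsto_const_nhds : Tendsto (fun _ : ℕ => t) atTop (𝓝 t)) h1
    simpa using this
  -- the real inequality for each k
  have hstep : ∀ k, u k * (μ A).toReal
      ≤ ∫ ω, Set.indicator {ω | ENNReal.ofReal (u k) ≤ maxFn T h ω} (fun ω => |h ω|) ω ∂μ :=
    fun k => wiener_step hT hTm hint hmeas (hu_pos k) (hu_lt k)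
  -- convergence of right-hand sides
  have hconv : Tendsto
      (fun k => ∫ ω, Set.indicator {ω | ENNReal.ofReal (u k) ≤ maxFn T h ω}
        (fun ω => |h ω|) ω ∂μ) atTop (𝓝 (∫ ω, Set.indicator A (fun ω => |h ω|) ω ∂μ)) := by
    apply tendsto_integral_of_dominated_convergence (fun ω => |h ω|)
    · intro k
      exact hint.abs.aestronglyMeasurable.indicator
        (measurableSet_le measurable_const (measurable_maxFn hTm hmeas))
    · exact hint.abs
    · intro k
      filter_upwards with ω
      rw [Real.norm_eq_abs, Set.indicator_apply]
      split_ifs <;> simp [abs_abs, abs_nonneg]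
    · filter_upwards with ω
      by_cases hω : ω ∈ A
      · rw [Set.indicator_of_mem hω]
        apply tendsto_const_nhds.congr fun k => ?_
        have hmem : ω ∈ {ω | ENNReal.ofReal (u k) ≤ maxFn T h ω} :=
          le_trans (ENNReal.ofReal_le_ofReal (hu_lt k).le) hω
        exact (Set.indicator_of_mem hmem (fun ω => |h ω|)).symm
      · rw [Set.indicator_of_notMem hω]
        have hlt : maxFn T h ω < ENNReal.ofReal t := lt_of_not_ge hω
        have htends : Tendsto (fun k => ENNReal.ofReal (u k)) atTop (𝓝 (ENNReal.ofReal t)) :=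
          (ENNReal.continuous_ofReal.tendsto t).comp hu_tendsto
        have hev : ∀ᶠ k in atTop, maxFn T h ω < ENNReal.ofReal (u k) :=
          htends.eventually (eventually_gt_nhds hlt)
        apply tendsto_const_nhds.congr'
        filter_upwards [hev] with k hk
        exact (Set.indicator_of_notMem
          (show ω ∉ {ω | ENNReal.ofReal (u k) ≤ maxFn T h ω} from
            fun hc => absurd hc (not_le_of_gt hk)) (fun ω => |h ω|)).symm
  have hreal : t * (μ A).toReal ≤ ∫ ω, Set.indicator A (fun ω => |h ω|) ω ∂μ := by
    refine le_of_tendsto_of_tendsto' (hu_tendsto.mul_const (μ A).toReal) hconv hstep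
  -- convert to ENNReal
  have hlhs : ENNReal.ofReal (t * (μ A).toReal) = ENNReal.ofReal t * μ A := by
    rw [ENNReal.ofReal_mul ht.le, ENNReal.ofReal_toReal (measure_ne_top μ A)]
  have hrhs : ENNReal.ofReal (∫ ω, Set.indicator A (fun ω => |h ω|) ω ∂μ)
      = ∫⁻ ω in A, ENNReal.ofReal |h ω| ∂μ := by
    rw [ofReal_integral_eq_lintegral_ofReal (hint.abs.indicator hA)
      (Eventually.of_forall (Set.indicator_nonneg fun ω _ => abs_nonneg (h ω)))]
    rw [← lintegral_indicator hA (fun ω => ENNReal.ofReal |h ω|)]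
    congr 1
    funext ω
    by_cases hω : ω ∈ A
    · rw [Set.indicator_of_mem hω, Set.indicator_of_mem hω]
    · rw [Set.indicator_of_notMem hω, Set.indicator_of_notMem hω, ENNReal.ofReal_zero]
  calc ENNReal.ofReal t * μ A = ENNReal.ofReal (t * (μ A).toReal) := hlhs.symm
    _ ≤ ENNReal.ofReal (∫ ω, Set.indicator A (fun ω => |h ω|) ω ∂μ) :=
        ENNReal.ofReal_le_ofReal hreal
    _ = _ := hrhs

end Aux

open Aux

/-- **Inequality (3.8)**: for `q > 1`, `t > 0` and `A_t = {M*(h) ≥ t}`,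
`t · μ{M*(h) ≥ t}^(1/q) ≤ q/(q-1) · ‖h·1_{A_t}‖_{q,∞}`. -/
theorem stmt13 {Ω : Type*} [MeasurableSpace Ω] (μ : Measure Ω) [IsProbabilityMeasure μ]
    (T : Ω ≃ᵐ Ω) (hT : MeasurePreserving (⇑T) μ μ)
    (q : ℝ) (hq : 1 < q)
    (h : Ω → ℝ) (hmeas : Measurable h) (hint : Integrable h μ)
    (t : ℝ) (ht : 0 < t) :
    ENNReal.ofReal t * (μ {ω | ENNReal.ofReal t ≤ maxFn (⇑T) h ω}) ^ (1 / q) ≤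
      ENNReal.ofReal (q / (q - 1)) *
        ⨆ (s : ℝ) (_ : 0 < s), ENNReal.ofReal s *
          (μ ({ω | s < |h ω|} ∩ {ω | ENNReal.ofReal t ≤ maxFn (⇑T) h ω})) ^ (1 / q) := by
  have hq0 : (0:ℝ) < q := lt_trans one_pos hq
  have hq1 : q - 1 > 0 := by linarith
  have hqq : (0:ℝ) < q / (q - 1) := by positivity
  have h1q : (0:ℝ) < 1 / q := by positivity
  set A := {ω | ENNReal.ofReal t ≤ maxFn (⇑T) h ω} with hAdef
  have hA : MeasurableSet A :=
    measurableSet_le measurable_const (measurable_maxFn T.measurable hmeas)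
  set c := ⨆ (s : ℝ) (_ : 0 < s), ENNReal.ofReal s *
      (μ ({ω | s < |h ω|} ∩ A)) ^ (1 / q) with hcdef
  -- trivial case : μ A = 0
  by_cases ha : μ A = 0
  · rw [ha, ENNReal.zero_rpow_of_pos h1q, mul_zero]
    exact zero_le
  -- the weak-norm bound on each slice
  have hsup : ∀ s : ℝ, 0 < s →
      ENNReal.ofReal s * (μ ({ω | s < |h ω|} ∩ A)) ^ (1 / q) ≤ c := by
    intro s hs
    exact le_iSup₂ (f := fun (s : ℝ) (_ : 0 < s) =>
      ENNReal.ofReal s * (μ ({ω | s < |h ω|} ∩ A)) ^ (1 / q)) s hs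
  -- if c = ⊤ we are done
  by_cases hctop : c = ⊤
  · rw [hctop, ENNReal.mul_top (by simp [ENNReal.ofReal_eq_zero, not_le, hqq] : ENNReal.ofReal (q / (q-1)) ≠ 0)]
    exact le_top
  -- maximal inequality + layer cake
  have hmax := maximal_ineq hT T.measurable hint hmeas ht
  have hlayer : ∫⁻ ω in A, ENNReal.ofReal |h ω| ∂μ
      = ∫⁻ s in Set.Ioi (0:ℝ), μ ({ω | s < |h ω|} ∩ A) := by
    rw [lintegral_eq_lintegral_meas_lt (μ.restrict A)
      (Eventually.of_forall fun ω => abs_nonneg (h ω)) hmeas.abs.aemeasurable]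
    exact lintegral_congr fun s =>
      Measure.restrict_apply (measurableSet_lt measurable_const hmeas.abs)
  -- if c = 0, then μ A = 0, contradiction
  by_cases hc0 : c = 0
  · exfalso
    have hB0 : ∀ s : ℝ, 0 < s → μ ({ω | s < |h ω|} ∩ A) = 0 := by
      intro s hs
      have := hsup s hs
      rw [hc0, nonpos_iff_eq_zero, mul_eq_zero] at this
      rcases this with h1 | h1
      · exact absurd h1 (by simp [ENNReal.ofReal_eq_zero, not_le, hs])
      · rcases (ENNReal.rpow_eq_zero_iff.mp h1) with ⟨h2, _⟩ | ⟨_, h2⟩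
        · exact h2
        · linarith
    have hz : ∫⁻ s in Set.Ioi (0:ℝ), μ ({ω | s < |h ω|} ∩ A) = 0 := by
      rw [setLIntegral_congr_fun measurableSet_Ioi
        (fun s (hs : s ∈ Set.Ioi (0:ℝ)) => hB0 s hs)]
      simp
    rw [hlayer, hz, nonpos_iff_eq_zero, mul_eq_zero] at hmax
    rcases hmax with h1 | h1
    · exact absurd h1 (by simp [ENNReal.ofReal_eq_zero, not_le, ht])
    · exact ha h1
  -- main case
  have hc' : 0 < c.toReal := ENNReal.toReal_pos hc0 hctop
  have ha' : 0 < (μ A).toReal := ENNReal.toReal_pos ha (measure_ne_top μ A)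
  set c' := c.toReal with hc'def
  set a' := (μ A).toReal with ha'def
  set s0 : ℝ := c' * a' ^ (-(1/q)) with hs0def
  have hs0 : 0 < s0 := by
    have := Real.rpow_pos_of_pos ha' (-(1/q))
    positivity
  -- pointwise bounds on the distribution function
  have hBs : ∀ s : ℝ, 0 < s →
      μ ({ω | s < |h ω|} ∩ A) ≤ (c / ENNReal.ofReal s) ^ q := by
    intro s hs
    have h1 := hsup s hs
    rw [mul_comm] at h1
    have h2 : (μ ({ω | s < |h ω|} ∩ A)) ^ (1/q) ≤ c / ENNReal.ofReal s := by
      rw [ENNReal.le_div_iff_mul_le (Or.inl (by simp [ENNReal.ofReal_eq_zero, not_le, hs]))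
        (Or.inl ENNReal.ofReal_ne_top)]
      exact h1
    have h3 := ENNReal.rpow_le_rpow h2 hq0.le
    rwa [← ENNReal.rpow_mul, one_div_mul_cancel hq0.ne', ENNReal.rpow_one] at h3
  have hBa : ∀ s : ℝ, μ ({ω | s < |h ω|} ∩ A) ≤ μ A :=
    fun s => measure_mono Set.inter_subset_right
  -- split the layer-cake integral at s0
  have hun : Set.Ioc (0:ℝ) s0 ∪ Set.Ioi s0 = Set.Ioi 0 := Set.Ioc_union_Ioi_eq_Ioi hs0.le
  have hsplit : ∫⁻ s in Set.Ioi (0:ℝ), μ ({ω | s < |h ω|} ∩ A)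
      ≤ μ A * ENNReal.ofReal s0 + ∫⁻ s in Set.Ioi s0, (c / ENNReal.ofReal s) ^ q := by
    rw [← hun, lintegral_union measurableSet_Ioi (Set.Ioc_disjoint_Ioi le_rfl)]
    apply add_le_add
    · calc ∫⁻ s in Set.Ioc (0:ℝ) s0, μ ({ω | s < |h ω|} ∩ A)
          ≤ ∫⁻ _ in Set.Ioc (0:ℝ) s0, μ A := lintegral_mono fun s => hBa s
        _ = μ A * ENNReal.ofReal s0 := by
            rw [lintegral_const, Measure.restrict_apply MeasurableSet.univ, Set.univ_inter,
              Real.volume_Ioc]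
            congr 1
            simp
    · exact setLIntegral_mono' measurableSet_Ioi fun s hs => hBs s (hs0.trans hs)
  -- compute the tail integral
  have htail : ∫⁻ s in Set.Ioi s0, (c / ENNReal.ofReal s) ^ q
      = ENNReal.ofReal (c' ^ q * (s0 ^ (1 - q) / (q - 1))) := by
    have hcongr : ∀ s ∈ Set.Ioi s0, (c / ENNReal.ofReal s) ^ q
        = ENNReal.ofReal ((c' / s) ^ q) := by
      intro s hs
      have hs' : 0 < s := hs0.trans hs
      rw [show c = ENNReal.ofReal c' from (ENNReal.ofReal_toReal hctop).symm,
        ← ENNReal.ofReal_div_of_pos hs', ENNReal.ofReal_rpow_of_pos (div_pos hc' hs')]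
    rw [setLIntegral_congr_fun measurableSet_Ioi hcongr]
    have hfeq : ∀ s ∈ Set.Ioi s0, (c' / s) ^ q = c' ^ q * s ^ (-q) := by
      intro s hs
      have hs' : 0 < s := hs0.trans hs
      rw [Real.div_rpow hc'.le hs'.le, Real.rpow_neg hs'.le, div_eq_mul_inv]
    have hIold : IntegrableOn (fun s => s ^ (-q)) (Set.Ioi s0) :=
      integrableOn_Ioi_rpow_of_lt (by linarith) hs0
    have hIOn : IntegrableOn (fun s => (c' / s) ^ q) (Set.Ioi s0) := by
      have h6 : IntegrableOn (fun s => c' ^ q * s ^ (-q)) (Set.Ioi s0) :=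
        hIold.const_mul (c' ^ q)
      exact h6.congr_fun (fun s hs => (hfeq s hs).symm) measurableSet_Ioi
    rw [← ofReal_integral_eq_lintegral_ofReal hIOn ((ae_restrict_iff' measurableSet_Ioi).mpr
      (ae_of_all _ fun s hs => Real.rpow_nonneg (div_nonneg hc'.le (hs0.trans hs).le) q))]
    congr 1
    rw [setIntegral_congr_fun measurableSet_Ioi hfeq, MeasureTheory.integral_const_mul,
      integral_Ioi_rpow_of_lt (by linarith) hs0]
    rw [show -q + 1 = -(q-1) by ring]
    rw [neg_div, div_neg, neg_neg]
    congr 2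
    ring
  -- combine
  have hkey : ENNReal.ofReal (t * a')
      ≤ ENNReal.ofReal (a' * s0 + c' ^ q * (s0 ^ (1 - q) / (q - 1))) := by
    have e1 : ENNReal.ofReal (t * a') = ENNReal.ofReal t * μ A := by
      rw [ENNReal.ofReal_mul ht.le, ha'def, ENNReal.ofReal_toReal (measure_ne_top μ A)]
    have e2 : ENNReal.ofReal (a' * s0 + c' ^ q * (s0 ^ (1 - q) / (q - 1)))
        = μ A * ENNReal.ofReal s0 + ENNReal.ofReal (c' ^ q * (s0 ^ (1 - q) / (q - 1))) := by
      rw [ENNReal.ofReal_add (by positivity) (by positivity), ENNReal.ofReal_mul ha'.le,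
        ha'def, ENNReal.ofReal_toReal (measure_ne_top μ A)]
    rw [e1, e2]
    calc ENNReal.ofReal t * μ A ≤ ∫⁻ ω in A, ENNReal.ofReal |h ω| ∂μ := hmax
      _ = ∫⁻ s in Set.Ioi (0:ℝ), μ ({ω | s < |h ω|} ∩ A) := hlayer
      _ ≤ _ := by rw [← htail]; exact hsplit
  -- real arithmetic
  have hreal : t * a' ≤ a' * s0 + c' ^ q * (s0 ^ (1 - q) / (q - 1)) :=
    (ENNReal.ofReal_le_ofReal_iff (by positivity)).mp hkey
  have harith : a' * s0 + c' ^ q * (s0 ^ (1 - q) / (q - 1))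
      = (q / (q - 1)) * (c' * a' ^ (1 - 1/q)) := by
    have e1 : a' * s0 = c' * a' ^ (1 - 1/q) := by
      rw [hs0def, show a' * (c' * a' ^ (-(1/q))) = c' * (a' ^ (1:ℝ) * a' ^ (-(1/q))) by
        rw [Real.rpow_one]; ring, ← Real.rpow_add ha']
      rw [show 1 + -(1/q) = 1 - 1/q by ring]
    have e2 : s0 ^ (1 - q) = c' ^ (1 - q) * a' ^ ((q - 1)/q) := by
      rw [hs0def, Real.mul_rpow hc'.le (Real.rpow_nonneg ha'.le _), ← Real.rpow_mul ha'.le]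
      congr 1
      field_simp
      congr 1
      ring
    have e3 : c' ^ q * (s0 ^ (1 - q) / (q - 1)) = (1/(q-1)) * (c' * a' ^ (1 - 1/q)) := by
      rw [e2, show (q-1)/q = 1 - 1/q by field_simp]
      rw [show c' ^ q * (c' ^ (1-q) * a' ^ (1-1/q) / (q-1))
          = (c' ^ q * c' ^ (1-q)) * a' ^ (1-1/q) / (q-1) by ring, ← Real.rpow_add hc']
      rw [show q + (1-q) = (1:ℝ) by ring, Real.rpow_one]
      ring
    rw [e1, e3]
    field_simp
    ring
  -- divide by a'^(1-1/q)
  have hpow : a' * a' ^ (1/q - 1) = a' ^ (1/q) := by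
    calc a' * a' ^ (1/q - 1) = a' ^ (1:ℝ) * a' ^ (1/q - 1) := by rw [Real.rpow_one]
      _ = a' ^ (1 + (1/q - 1)) := (Real.rpow_add ha' _ _).symm
      _ = a' ^ (1/q) := by norm_num
  have hfinal_real : t * a' ^ (1/q) ≤ (q/(q-1)) * c' := by
    have key : t * a' ≤ (q / (q - 1)) * (c' * a' ^ (1 - 1/q)) := hreal.trans_eq harith
    have h5 : (t * a') * a' ^ (1/q - 1)
        ≤ ((q/(q-1)) * (c' * a' ^ (1 - 1/q))) * a' ^ (1/q - 1) :=
      mul_le_mul_of_nonneg_right key (Real.rpow_nonneg ha'.le _)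
    calc t * a' ^ (1/q) = (t * a') * a' ^ (1/q - 1) := by rw [← hpow]; ring
      _ ≤ ((q/(q-1)) * (c' * a' ^ (1 - 1/q))) * a' ^ (1/q - 1) := h5
      _ = (q/(q-1)) * c' * (a' ^ (1 - 1/q) * a' ^ (1/q - 1)) := by ring
      _ = (q/(q-1)) * c' := by
          rw [← Real.rpow_add ha', show (1 - 1/q) + (1/q - 1) = (0:ℝ) by ring,
            Real.rpow_zero, mul_one]
  -- conclude in ℝ≥0∞
  have g1 : (μ A) ^ (1/q : ℝ) = ENNReal.ofReal (a' ^ (1/q)) := by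
    rw [show μ A = ENNReal.ofReal a' from (ENNReal.ofReal_toReal (measure_ne_top μ A)).symm,
      ENNReal.ofReal_rpow_of_pos ha']
  calc ENNReal.ofReal t * (μ A) ^ (1/q : ℝ)
      = ENNReal.ofReal (t * a' ^ (1/q)) := by
        rw [g1, ENNReal.ofReal_mul ht.le]
    _ ≤ ENNReal.ofReal ((q/(q-1)) * c') := ENNReal.ofReal_le_ofReal hfinal_real
    _ = ENNReal.ofReal (q/(q-1)) * c := by
        rw [ENNReal.ofReal_mul hqq.le, hc'def, ENNReal.ofReal_toReal hctop]
end
end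

section
/- Let g : Ω → ℝ be measurable, let ε > 0, and let 1 ≤ k ≤ n be integers. Then μ{ max_{1 ≤ j ≤ n} |g ∘ T^j| > 2ε n^{1/2} } ≤ (⌊n/k⌋ + 1) · μ{ |g| > ε n^{1/2} } + (⌊n/k⌋ + 1) · μ{ M*(g − g∘T) > ε n^{1/2}/k }. -/
open MeasureTheory Filter Topology
open scoped ENNReal NNReal

noncomputable section

/-- **Inequality (3.11)**: for `1 ≤ k ≤ n` and `ε > 0`,
`μ{max_{1≤j≤n} |g∘T^j| > 2ε√n} ≤ (⌊n/k⌋+1)(μ{|g| > ε√n} + μ{M*(g-g∘T) > ε√n/k})`. -/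
theorem stmt15 {Ω : Type*} [MeasurableSpace Ω] (μ : Measure Ω) [IsProbabilityMeasure μ]
    (T : Ω ≃ᵐ Ω) (hT : MeasurePreserving (⇑T) μ μ)
    (g : Ω → ℝ) (hg : Measurable g)
    (ε : ℝ) (hε : 0 < ε)
    (k n : ℕ) (hk : 1 ≤ k) (hkn : k ≤ n) :
    μ {ω | 2 * ε * Real.sqrt n <
        ((((Finset.Icc 1 n).sup fun j => ‖g ((⇑T)^[j] ω)‖₊ : ℝ≥0)) : ℝ)} ≤
      ((n / k : ℕ) + 1 : ℝ≥0∞) * μ {ω | ε * Real.sqrt n < |g ω|} +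
      ((n / k : ℕ) + 1 : ℝ≥0∞) *
        μ {ω | ENNReal.ofReal (ε * Real.sqrt n / k) <
          maxFn (⇑T) (fun x => g x - g (T x)) ω} := by
  have hn : 1 ≤ n := le_trans hk hkn
  set c := ε * Real.sqrt n with hc
  have hcpos : 0 < c := mul_pos hε (Real.sqrt_pos.mpr (by exact_mod_cast hn))
  set h : Ω → ℝ := fun x => g x - g (T x) with hh
  set B := {ω | c < |g ω|} with hB
  set C := {ω | ENNReal.ofReal (c / k) < maxFn (⇑T) h ω} with hC
  -- measurability
  have hmeasS : ∀ m : ℕ, Measurable fun ω => partialSumT (⇑T) h m ω := by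
    intro m
    unfold partialSumT
    apply Finset.measurable_sum
    intro i _
    exact (hg.sub (hg.comp T.measurable)).comp (T.measurable.iterate i)
  have hmeasM : Measurable (maxFn (⇑T) h) := by
    apply Measurable.iSup
    intro N
    exact (((hmeasS (N + 1)).nnnorm).coe_nnreal_ennreal).div measurable_const
  have hBmeas : MeasurableSet B := measurableSet_lt measurable_const hg.abs
  have hCmeas : MeasurableSet C := measurableSet_lt measurable_const hmeasM
  -- covering lemma
  have cover : {ω | 2 * ε * Real.sqrt n <
        ((((Finset.Icc 1 n).sup fun j => ‖g ((⇑T)^[j] ω)‖₊ : ℝ≥0)) : ℝ)} ⊆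
      ⋃ q ∈ Finset.range (n / k + 1), (⇑T)^[q * k] ⁻¹' (B ∪ C) := by
    intro ω hω
    simp only [Set.mem_setOf_eq] at hω
    have h2c : 2 * c < (((Finset.Icc 1 n).sup fun j => ‖g ((⇑T)^[j] ω)‖₊ : ℝ≥0) : ℝ) := by
      rw [hc]; linarith [hω]
    have hne : (Finset.Icc 1 n).Nonempty := ⟨1, Finset.mem_Icc.mpr ⟨le_refl 1, hn⟩⟩
    obtain ⟨j, hjmem, hjsup⟩ :=
      Finset.exists_mem_eq_sup (Finset.Icc 1 n) hne (fun j => ‖g ((⇑T)^[j] ω)‖₊)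
    rw [hjsup] at h2c
    have hj2c : 2 * c < |g ((⇑T)^[j] ω)| := by
      rwa [coe_nnnorm, Real.norm_eq_abs] at h2c
    obtain ⟨hj1, hjn⟩ := Finset.mem_Icc.mp hjmem
    set q := j / k with hq
    set r := j % k with hr
    have hdm : k * (j / k) + j % k = j := Nat.div_add_mod j k
    have hqr : q * k + r = j := by rw [hq, hr, Nat.mul_comm]; exact Nat.div_add_mod j k
    have hrk : r < k := Nat.mod_lt j (by omega)
    have hq_le : q ≤ n / k := Nat.div_le_div_right hjn
    set y := (⇑T)^[q * k] ω with hy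
    have hTj : (⇑T)^[j] ω = (⇑T)^[r] y := by
      rw [hy, ← Function.iterate_add_apply]
      congr 1
      omega
    refine Set.mem_biUnion (Finset.mem_range.mpr (by omega : q < n / k + 1)) ?_
    show y ∈ B ∪ C
    by_cases hgy : c < |g y|
    · exact Or.inl hgy
    · push_neg at hgy
      have hr1 : 1 ≤ r := by
        rcases Nat.eq_zero_or_pos r with h0 | h0
        · exfalso
          have : (⇑T)^[j] ω = y := by rw [hTj, h0]; rfl
          rw [this] at hj2c
          linarith
        · exact h0
      have hS : partialSumT (⇑T) h r y = g y - g ((⇑T)^[r] y) := by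
        unfold partialSumT
        have : ∀ i : ℕ, h ((⇑T)^[i] y) = g ((⇑T)^[i] y) - g ((⇑T)^[i + 1] y) := by
          intro i
          rw [hh]
          simp only [Function.iterate_succ_apply']
        rw [Finset.sum_congr rfl fun i _ => this i]
        exact Finset.sum_range_sub' (fun i => g ((⇑T)^[i] y)) r
      have hSbig : c < |partialSumT (⇑T) h r y| := by
        rw [hS, ← hTj]
        have h1 : |g ((⇑T)^[j] ω)| - |g y| ≤ |g y - g ((⇑T)^[j] ω)| := by
          rw [abs_sub_comm]
          exact abs_sub_abs_le_abs_sub _ _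
        linarith
      right
      show ENNReal.ofReal (c / k) < maxFn (⇑T) h y
      have hterm : ENNReal.ofReal (c / k) <
          (‖partialSumT (⇑T) h ((r - 1) + 1) y‖₊ : ℝ≥0∞) / ((r - 1 : ℕ) + 1) := by
        have hr' : (r - 1) + 1 = r := by omega
        rw [hr']
        have hcast : ((r - 1 : ℕ) : ℝ≥0∞) + 1 = ((r : ℕ) : ℝ≥0∞) := by
          norm_cast
        rw [hcast]
        have hrpos : (0 : ℝ) < r := by exact_mod_cast hr1
        have hkey : c / k < |partialSumT (⇑T) h r y| / r := by
          calc c / k ≤ c / r := by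
                gcongr
            _ < |partialSumT (⇑T) h r y| / r := by gcongr
        calc ENNReal.ofReal (c / k)
            < ENNReal.ofReal (|partialSumT (⇑T) h r y| / r) :=
              (ENNReal.ofReal_lt_ofReal_iff (lt_of_le_of_lt (by positivity) hkey)).mpr hkey
          _ = (‖partialSumT (⇑T) h r y‖₊ : ℝ≥0∞) / ((r : ℕ) : ℝ≥0∞) := by
              rw [ENNReal.ofReal_div_of_pos hrpos, ← enorm_eq_nnnorm, Real.enorm_eq_ofReal_abs,
                ENNReal.ofReal_natCast]
      calc ENNReal.ofReal (c / k) < _ := hterm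
        _ ≤ maxFn (⇑T) h y := le_iSup (fun N => (‖partialSumT (⇑T) h (N + 1) y‖₊ : ℝ≥0∞) / ((N : ℝ≥0∞) + 1)) (r - 1)
  -- measure computation
  calc μ _ ≤ μ (⋃ q ∈ Finset.range (n / k + 1), (⇑T)^[q * k] ⁻¹' (B ∪ C)) := measure_mono cover
    _ ≤ ∑ q ∈ Finset.range (n / k + 1), μ ((⇑T)^[q * k] ⁻¹' (B ∪ C)) :=
        measure_biUnion_finset_le _ _
    _ = ∑ q ∈ Finset.range (n / k + 1), μ (B ∪ C) := by
        refine Finset.sum_congr rfl fun q _ => ?_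
        exact (hT.iterate (q * k)).measure_preimage (hBmeas.union hCmeas).nullMeasurableSet
    _ = ((n / k : ℕ) + 1 : ℝ≥0∞) * μ (B ∪ C) := by
        rw [Finset.sum_const, Finset.card_range, nsmul_eq_mul]
        push_cast
        ring
    _ ≤ ((n / k : ℕ) + 1 : ℝ≥0∞) * (μ B + μ C) := by
        gcongr
        exact measure_union_le _ _
    _ = _ := mul_add _ _ _
end
end

section
/- Let g : Ω → ℝ be measurable, let ε > 0, let α > 0, and let 1 ≤ k ≤ n be integers. Then μ{ max_{1 ≤ j ≤ n} |g − g ∘ T^j| > ε n^α } ≤ 2(⌊n/k⌋ + 1) · μ{ |g| > ε n^α/4 } + 2(⌊n/k⌋ + 1) · μ{ M*(g − g∘T) > ε n^α/(2k) }. -/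
open MeasureTheory Filter Topology
open scoped ENNReal NNReal

noncomputable section

lemma partialSumT_telescope {Ω : Type*} (T : Ω → Ω) (g : Ω → ℝ) (r : ℕ) (ω : Ω) :
    partialSumT T (fun x => g x - g (T x)) r ω = g ω - g (T^[r] ω) := by
  unfold partialSumT
  have h1 : ∀ j ∈ Finset.range r, (fun x => g x - g (T x)) (T^[j] ω)
      = g (T^[j] ω) - g (T^[j+1] ω) := by
    intro j _
    simp [Function.iterate_succ_apply']
  rw [Finset.sum_congr rfl h1, Finset.sum_range_sub' (fun i => g (T^[i] ω)) r]
  simp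

/-- **Inequality (3.40)**: for `1 ≤ k ≤ n`, `ε > 0` and `α > 0`,
`μ{max_{1≤j≤n} |g - g∘T^j| > εn^α} ≤ 2(⌊n/k⌋+1)(μ{|g| > εn^α/4} + μ{M*(g-g∘T) > εn^α/(2k)})`. -/
theorem stmt16 {Ω : Type*} [MeasurableSpace Ω] (μ : Measure Ω) [IsProbabilityMeasure μ]
    (T : Ω ≃ᵐ Ω) (hT : MeasurePreserving (⇑T) μ μ)
    (g : Ω → ℝ) (hg : Measurable g)
    (ε : ℝ) (hε : 0 < ε) (α : ℝ) (hα : 0 < α)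
    (k n : ℕ) (hk : 1 ≤ k) (hkn : k ≤ n) :
    μ {ω | ε * (n : ℝ) ^ α <
        ((((Finset.Icc 1 n).sup fun j => ‖g ω - g ((⇑T)^[j] ω)‖₊ : ℝ≥0)) : ℝ)} ≤
      2 * ((n / k : ℕ) + 1 : ℝ≥0∞) * μ {ω | ε * (n : ℝ) ^ α / 4 < |g ω|} +
      2 * ((n / k : ℕ) + 1 : ℝ≥0∞) *
        μ {ω | ENNReal.ofReal (ε * (n : ℝ) ^ α / (2 * k)) <
          maxFn (⇑T) (fun x => g x - g (T x)) ω} := by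
  have hn1 : 1 ≤ n := hk.trans hkn
  set c := ε * (n : ℝ) ^ α with hc
  have hc0 : 0 < c := mul_pos hε (Real.rpow_pos_of_pos (by exact_mod_cast hn1) α)
  set A : Set Ω := {ω | c / 4 < |g ω|} with hA
  set B : Set Ω := {ω | ENNReal.ofReal (c / (2 * k)) <
      maxFn (⇑T) (fun x => g x - g (T x)) ω} with hB
  have hAmeas : MeasurableSet A := measurableSet_lt measurable_const hg.abs
  have hmeas_h : Measurable (fun x => g x - g (T x)) := hg.sub (hg.comp T.measurable)
  have hSmeas : ∀ N : ℕ, Measurable (partialSumT (⇑T) (fun x => g x - g (T x)) N) := by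
    intro N
    unfold partialSumT
    exact Finset.measurable_sum _ fun j _ => hmeas_h.comp (T.measurable.iterate j)
  have hMmeas : Measurable (maxFn (⇑T) (fun x => g x - g (T x))) := by
    apply Measurable.iSup
    intro N
    exact (measurable_coe_nnreal_ennreal.comp (hSmeas (N+1)).nnnorm).div_const _
  have hBmeas : MeasurableSet B := measurableSet_lt measurable_const hMmeas
  -- pointwise inclusion
  have key : {ω | c < (((Finset.Icc 1 n).sup fun j => ‖g ω - g ((⇑T)^[j] ω)‖₊ : ℝ≥0) : ℝ)}
      ⊆ A ∪ ⋃ q ∈ Finset.range (n / k + 1),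
        ((⇑T)^[k * q] ⁻¹' A ∪ (⇑T)^[k * q] ⁻¹' B) := by
    intro ω hω
    simp only [Set.mem_setOf_eq] at hω
    obtain ⟨j, hjmem, hjeq⟩ := Finset.exists_mem_eq_sup (Finset.Icc 1 n)
      ⟨1, Finset.mem_Icc.mpr ⟨le_refl 1, hn1⟩⟩ (fun j => ‖g ω - g ((⇑T)^[j] ω)‖₊)
    rw [hjeq] at hω
    rw [coe_nnnorm, Real.norm_eq_abs] at hω
    obtain ⟨hj1, hjn⟩ := Finset.mem_Icc.mp hjmem
    have hq : j / k ≤ n / k := Nat.div_le_div_right hjn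
    have hrk : j % k < k := Nat.mod_lt j hk
    by_cases h1 : c / 4 < |g ω|
    · exact Or.inl h1
    right
    refine Set.mem_biUnion (Finset.mem_range.mpr (Nat.lt_succ_of_le hq)) ?_
    by_cases h2 : c / 4 < |g ((⇑T)^[k * (j / k)] ω)|
    · exact Or.inl h2
    right
    push_neg at h1 h2
    have hrj : j % k + k * (j / k) = j := by
      have := Nat.div_add_mod j k; omega
    have hsplit : g ω - g ((⇑T)^[j] ω)
        = (g ω - g ((⇑T)^[k * (j / k)] ω))
          + partialSumT (⇑T) (fun x => g x - g (T x)) (j % k) ((⇑T)^[k * (j / k)] ω) := by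
      rw [partialSumT_telescope, ← Function.iterate_add_apply, hrj]
      ring
    set s := partialSumT (⇑T) (fun x => g x - g (T x)) (j % k) ((⇑T)^[k * (j / k)] ω) with hs_def
    have habs : |g ω - g ((⇑T)^[k * (j / k)] ω)| ≤ c / 4 + c / 4 := by
      calc |g ω - g ((⇑T)^[k * (j / k)] ω)| ≤ |g ω| + |g ((⇑T)^[k * (j / k)] ω)| :=
            abs_sub _ _
        _ ≤ c / 4 + c / 4 := add_le_add h1 h2
    have hs : c / 2 < |s| := by
      rw [hsplit] at hω
      have := abs_add_le (g ω - g ((⇑T)^[k * (j / k)] ω)) s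
      have := abs_le.mp (le_refl |s|)
      nlinarith [abs_add_le (g ω - g ((⇑T)^[k * (j / k)] ω)) s]
    have hr0 : 0 < j % k := by
      rcases Nat.eq_zero_or_pos (j % k) with hr | hr
      · exfalso
        rw [hs_def, hr] at hs
        simp [partialSumT] at hs
        linarith
      · exact hr
    obtain ⟨N, hN⟩ : ∃ N : ℕ, j % k = N + 1 := ⟨j % k - 1, by omega⟩
    have hNk : (N : ℝ) + 1 ≤ (k : ℝ) := by
      have : N + 1 ≤ k := by omega
      exact_mod_cast this
    have hkpos : (0 : ℝ) < k := by exact_mod_cast hk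
    have hreal : c / (2 * k) < |s| / (N + 1) := by
      rw [div_lt_div_iff₀ (by positivity) (by positivity)]
      nlinarith
    show ENNReal.ofReal (c / (2 * k)) < maxFn (⇑T) (fun x => g x - g (T x)) ((⇑T)^[k * (j / k)] ω)
    have hstep : ENNReal.ofReal (c / (2 * k))
        < (‖partialSumT (⇑T) (fun x => g x - g (T x)) (N + 1) ((⇑T)^[k * (j / k)] ω)‖₊ : ℝ≥0∞)
          / ((N : ℝ≥0∞) + 1) := by
      have hEq : (‖partialSumT (⇑T) (fun x => g x - g (T x)) (N + 1) ((⇑T)^[k * (j / k)] ω)‖₊ : ℝ≥0∞)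
          / ((N : ℝ≥0∞) + 1) = ENNReal.ofReal (|s| / (N + 1)) := by
        rw [hs_def, hN]
        rw [ENNReal.ofReal_div_of_pos (by positivity), ← enorm_eq_nnnorm, Real.enorm_eq_ofReal_abs]
        congr 1
        rw [ENNReal.ofReal_add (by positivity) zero_le_one]
        simp
      rw [hEq]
      have hq0 : (0:ℝ) < |s| / (N + 1) := lt_trans (by positivity) hreal
      exact (ENNReal.ofReal_lt_ofReal_iff hq0).mpr hreal
    exact hstep.trans_le (le_iSup (fun N : ℕ =>
      (‖partialSumT (⇑T) (fun x => g x - g (T x)) (N + 1) ((⇑T)^[k * (j / k)] ω)‖₊ : ℝ≥0∞)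
        / ((N : ℝ≥0∞) + 1)) N)
  -- measure estimates
  have hpreA : ∀ q : ℕ, μ ((⇑T)^[k * q] ⁻¹' A) = μ A := fun q =>
    (hT.iterate (k * q)).measure_preimage hAmeas.nullMeasurableSet
  have hpreB : ∀ q : ℕ, μ ((⇑T)^[k * q] ⁻¹' B) = μ B := fun q =>
    (hT.iterate (k * q)).measure_preimage hBmeas.nullMeasurableSet
  set m : ℝ≥0∞ := ((n / k : ℕ) : ℝ≥0∞) + 1 with hm
  have hm1 : 1 ≤ m := le_add_self
  clear_value m
  calc μ {ω | c < (((Finset.Icc 1 n).sup fun j => ‖g ω - g ((⇑T)^[j] ω)‖₊ : ℝ≥0) : ℝ)}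
      ≤ μ (A ∪ ⋃ q ∈ Finset.range (n / k + 1),
        ((⇑T)^[k * q] ⁻¹' A ∪ (⇑T)^[k * q] ⁻¹' B)) := measure_mono key
    _ ≤ μ A + μ (⋃ q ∈ Finset.range (n / k + 1),
        ((⇑T)^[k * q] ⁻¹' A ∪ (⇑T)^[k * q] ⁻¹' B)) := measure_union_le _ _
    _ ≤ μ A + ∑ q ∈ Finset.range (n / k + 1),
        μ ((⇑T)^[k * q] ⁻¹' A ∪ (⇑T)^[k * q] ⁻¹' B) := by
        gcongr
        exact measure_biUnion_finset_le _ _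
    _ ≤ μ A + ∑ q ∈ Finset.range (n / k + 1), (μ A + μ B) := by
        gcongr with q hq
        calc μ ((⇑T)^[k * q] ⁻¹' A ∪ (⇑T)^[k * q] ⁻¹' B)
            ≤ μ ((⇑T)^[k * q] ⁻¹' A) + μ ((⇑T)^[k * q] ⁻¹' B) := measure_union_le _ _
          _ = μ A + μ B := by rw [hpreA, hpreB]
    _ = μ A + m * (μ A + μ B) := by
        rw [Finset.sum_const, Finset.card_range, nsmul_eq_mul, hm, Nat.cast_add, Nat.cast_one]
    _ ≤ 2 * m * μ A + 2 * m * μ B := by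
        have hm2 : m ≤ 2 * m := by rw [two_mul]; exact le_add_self
        have h1 : μ A + m * μ A ≤ 2 * m * μ A := by
          calc μ A + m * μ A ≤ m * μ A + m * μ A :=
                add_le_add (le_mul_of_one_le_left zero_le hm1) le_rfl
            _ = 2 * m * μ A := by rw [two_mul, add_mul]
        have h2 : m * μ B ≤ 2 * m * μ B := mul_le_mul_left hm2 _
        calc μ A + m * (μ A + μ B) = (μ A + m * μ A) + m * μ B := by ring
          _ ≤ 2 * m * μ A + 2 * m * μ B := add_le_add h1 h2
end
end
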